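/- Let G be a finite 2-group with abelianization isomorphic to the Klein four-group. If G admits an automorphism σ of order 3 such that x·σ(x)·σ²(x) ∈ [G,G] for all x ∈ G, then G is isomorphic to the Klein four-group ℤ/2 × ℤ/2 or to the quaternion group Q₈. -/

import Mathlib

set_option maxHeartbeats 1000000


open Subgroup
open scoped commutatorElement

section Helpers

variable {G : Type*} [Group G]

/-- In a group of cardinality at most 2, any two non-identity elements coincide. -/
private lemma eq_of_card_le_two {H : Type*} [Group H] [Finite H] (h : Nat.card H ≤ 2)
    {x y : H} (hx : x ≠ 1) (hy : y ≠ 1) : x = y := by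
  by_contra hxy
  have hinj : Function.Injective (![1, x, y] : Fin 3 → H) := by
    intro i j hij
    fin_cases i <;> fin_cases j <;>
      first
        | rfl
        | (exact absurd hij (by simp [Matrix.cons_val_zero, Matrix.cons_val_one]; tauto))
  have h3 := Nat.card_le_card_of_injective _ hinj
  simp [Nat.card_eq_fintype_card (α := Fin 3)] at h3
  omega

/-- Two distinct nontrivial elements of a group of cardinality 4 generate it. -/
private lemma closure_pair_eq_top {A : Type*} [Group A] [Finite A] (hA : Nat.card A = 4)
    {x y : A} (hx : x ≠ 1) (hy : y ≠ 1) (hxy : x ≠ y) :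
    closure ({x, y} : Set A) = ⊤ := by
  set H := closure ({x, y} : Set A) with hH
  have hxH : x ∈ H := subset_closure (by simp)
  have hyH : y ∈ H := subset_closure (by simp)
  have h3 : ¬ (Nat.card H ≤ 2) := by
    intro h
    exact hxy (Subtype.ext_iff.mp (eq_of_card_le_two h (x := ⟨x, hxH⟩) (y := ⟨y, hyH⟩)
      (by simp [Subtype.ext_iff, hx]) (by simp [Subtype.ext_iff, hy])))
  have hdvd : Nat.card H ∣ 4 := hA ▸ H.card_subgroup_dvd_card
  have hle : Nat.card H ≤ 4 := Nat.le_of_dvd (by omega) hdvd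
  have : Nat.card H = 4 := by
    interval_cases h : (Nat.card H) <;> first | rfl | (exfalso; revert hdvd; decide)
  exact H.eq_top_of_card_eq (this.trans hA.symm)

/-- A group generated by a set of pairwise commuting elements is commutative. -/
private lemma commute_of_closure_eq_top {S : Set G} (hS : ∀ a ∈ S, ∀ b ∈ S, Commute a b)
    (hT : closure S = ⊤) (x y : G) : x * y = y * x := by
  have step1 : ∀ a ∈ S, closure S ≤ centralizer {a} := by
    intro a ha
    rw [closure_le]
    intro b hb
    rw [SetLike.mem_coe, mem_centralizer_iff]
    rintro h rfl
    exact hS h ha b hb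
  have step2 : ∀ z : G, closure S ≤ centralizer {z} := by
    intro z
    rw [closure_le]
    intro b hb
    rw [SetLike.mem_coe, mem_centralizer_iff]
    rintro h rfl
    exact (mem_centralizer_iff.mp (step1 b hb (hT ▸ mem_top h)) b rfl).symm
  exact (mem_centralizer_iff.mp (step2 y (hT ▸ mem_top x)) y rfl).symm

end Helpers


open Subgroup

section QuatRecognition

variable {G : Type*} [Group G] [Finite G]

omit [Finite G] in
private lemma pow_val_add {x : G} (hx4 : x ^ 4 = 1) (i j : ZMod (2 * 2)) :
    x ^ (i + j).val = x ^ i.val * x ^ j.val := by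
  have hmod : ∀ m : ℕ, x ^ (m % 4) = x ^ m := by
    intro m
    conv_rhs => rw [← Nat.div_add_mod m 4]
    rw [pow_add, pow_mul, hx4, one_pow, one_mul]
  rw [← pow_add, ZMod.val_add, hmod]

omit [Finite G] in
private lemma pow_val_neg {x : G} (hx4 : x ^ 4 = 1) (i : ZMod (2 * 2)) :
    x ^ (-i).val = (x ^ i.val)⁻¹ := by
  refine eq_inv_of_mul_eq_one_left ?_
  rw [← pow_val_add hx4, neg_add_cancel, ZMod.val_zero, pow_zero]

/-- Recognition of the quaternion group of order 8. -/
private lemma mulEquiv_quaternion {x y : G}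
    (hx4 : x ^ 4 = 1) (hyx : y * x * y⁻¹ = x⁻¹) (hy2 : y ^ 2 = x ^ 2)
    (hgen : closure ({x, y} : Set G) = ⊤) (hcard : Nat.card G = 8) :
    Nonempty (G ≃* QuaternionGroup 2) := by
  have hconj : ∀ m : ℕ, y * x ^ m * y⁻¹ = (x ^ m)⁻¹ := by
    intro m
    calc y * x ^ m * y⁻¹ = (y * x * y⁻¹) ^ m := by rw [conj_pow]
    _ = (x ^ m)⁻¹ := by rw [hyx, inv_pow]
  have hyxm : ∀ m : ℕ, y * x ^ m = (x ^ m)⁻¹ * y := by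
    intro m
    calc y * x ^ m = (y * x ^ m * y⁻¹) * y := by group
    _ = (x ^ m)⁻¹ * y := by rw [hconj]
  have hval2 : ((2 : ZMod (2 * 2)).val) = 2 := rfl
  -- the homomorphism
  let f : QuaternionGroup 2 → G := fun q =>
    QuaternionGroup.casesOn q (fun i => x ^ i.val) (fun i => x ^ (-i).val * y)
  have hmul : ∀ p q : QuaternionGroup 2, f (p * q) = f p * f q := by
    rintro (i | i) (j | j)
    · show x ^ (i + j).val = x ^ i.val * x ^ j.val
      exact pow_val_add hx4 i j
    · show x ^ (-(j - i)).val * y = x ^ i.val * (x ^ (-j).val * y)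
      rw [show -(j - i) = i + -j by ring, pow_val_add hx4, mul_assoc]
    · show x ^ (-(i + j)).val * y = x ^ (-i).val * y * x ^ j.val
      rw [mul_assoc, hyxm, show -(i + j) = -i + -j by ring, pow_val_add hx4,
        pow_val_neg hx4 j, ← mul_assoc]
    · show x ^ ((2 : ZMod (2 * 2)) + j - i).val = x ^ (-i).val * y * (x ^ (-j).val * y)
      have h1 : y * (x ^ (-j).val * y) = x ^ j.val * (y * y) := by
        rw [← mul_assoc, hyxm, pow_val_neg hx4 j, inv_inv, mul_assoc]
      have h2 : y * y = x ^ (2 : ZMod (2 * 2)).val := by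
        rw [hval2, ← pow_two, hy2]
      rw [mul_assoc, h1, h2, ← pow_val_add hx4, ← pow_val_add hx4]
      congr 1
      ring
  let φ : QuaternionGroup 2 →* G := MonoidHom.mk' f hmul
  have hx : φ (QuaternionGroup.a 1) = x := by
    show x ^ (1 : ZMod (2 * 2)).val = x
    rw [show ((1 : ZMod (2 * 2)).val) = 1 from rfl, pow_one]
  have hy : φ (QuaternionGroup.xa 0) = y := by
    show x ^ (-0 : ZMod (2 * 2)).val * y = y
    rw [neg_zero, ZMod.val_zero, pow_zero, one_mul]
  have hsurj : Function.Surjective φ := by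
    rw [← MonoidHom.range_eq_top]
    rw [eq_top_iff, ← hgen, closure_le]
    rintro g (rfl | rfl)
    · exact ⟨QuaternionGroup.a 1, hx⟩
    · exact ⟨QuaternionGroup.xa 0, hy⟩
  have hcardQ : Nat.card (QuaternionGroup 2) = 8 := by
    rw [Nat.card_eq_fintype_card, QuaternionGroup.card]
  have hbij : Function.Bijective φ :=
    (Nat.bijective_iff_surjective_and_card φ).mpr ⟨hsurj, by rw [hcardQ, hcard]⟩
  exact ⟨(MulEquiv.ofBijective φ hbij).symm⟩

end QuatRecognition


open Subgroup

section Q8Facts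

private lemma q8_comm_cases : ∀ u v : QuaternionGroup 2,
    ⁅u, v⁆ = 1 ∨ ⁅u, v⁆ = QuaternionGroup.a 2 := by decide

private lemma q8_noncomm : (QuaternionGroup.a 1 : QuaternionGroup 2) * QuaternionGroup.xa 0
    ≠ QuaternionGroup.xa 0 * QuaternionGroup.a 1 := by decide

private lemma q8_commutator_mem {z : QuaternionGroup 2} (hz : z ∈ commutator (QuaternionGroup 2)) :
    z = 1 ∨ z = QuaternionGroup.a 2 := by
  let Z8 : Subgroup (QuaternionGroup 2) :=
    { carrier := {1, QuaternionGroup.a 2}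
      one_mem' := by left; rfl
      mul_mem' := by
        intro u v hu hv
        rcases hu with rfl | rfl <;> rcases hv with rfl | rfl <;>
          simp [Set.mem_insert_iff, Set.mem_singleton_iff] <;> decide
      inv_mem' := by
        intro u hu
        rcases hu with rfl | rfl <;>
          simp [Set.mem_insert_iff, Set.mem_singleton_iff] <;> decide }
  have hle : commutator (QuaternionGroup 2) ≤ Z8 := by
    rw [_root_.commutator_def, Subgroup.commutator_le]
    intro g1 _ g2 _
    rcases q8_comm_cases g1 g2 with h | h <;> rw [h]
    · exact Z8.one_mem
    · right; rfl
  exact hle hz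

private lemma q8_gen : closure ({QuaternionGroup.a 1, QuaternionGroup.xa 0} :
    Set (QuaternionGroup 2)) = ⊤ := by
  rw [eq_top_iff]
  rintro (i | i) -
  · rw [show (QuaternionGroup.a i : QuaternionGroup 2) = QuaternionGroup.a ((i.val : ℕ) : ZMod (2*2))
      by rw [ZMod.natCast_val, ZMod.cast_id], ← QuaternionGroup.a_one_pow]
    exact pow_mem (subset_closure (by simp)) _
  · have h1 : (QuaternionGroup.xa i : QuaternionGroup 2) =
        QuaternionGroup.a (-i) * QuaternionGroup.xa 0 := by
      rw [QuaternionGroup.a_mul_xa]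
      congr 1
      ring
    rw [h1, show (QuaternionGroup.a (-i) : QuaternionGroup 2) =
        QuaternionGroup.a (((-i).val : ℕ) : ZMod (2*2))
      by rw [ZMod.natCast_val, ZMod.cast_id], ← QuaternionGroup.a_one_pow]
    exact mul_mem (pow_mem (subset_closure (by simp)) _) (subset_closure (by simp))

private lemma q8_ij : ⁅(QuaternionGroup.a 1 : QuaternionGroup 2), (QuaternionGroup.xa 0 :
    QuaternionGroup 2)⁆ = (QuaternionGroup.a 2 : QuaternionGroup 2) := by decide

private lemma q8_i2 : (QuaternionGroup.a 1 : QuaternionGroup 2) * QuaternionGroup.a 1 *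
    ((QuaternionGroup.a 2 : QuaternionGroup 2))⁻¹ = 1 := by decide

private lemma q8_j2 : (QuaternionGroup.xa 0 : QuaternionGroup 2) * QuaternionGroup.xa 0 *
    ((QuaternionGroup.a 2 : QuaternionGroup 2))⁻¹ = 1 := by decide

end Q8Facts

section Endgame

variable {G : Type*} [Group G] [Finite G]

private lemma v4_sq : ∀ w : Multiplicative (ZMod 2 × ZMod 2), w * w = 1 := by decide

private abbrev v4g1 : Multiplicative (ZMod 2 × ZMod 2) := Multiplicative.ofAdd (1, 0)
private abbrev v4g2 : Multiplicative (ZMod 2 × ZMod 2) := Multiplicative.ofAdd (0, 1)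

private lemma v4g1_ne_one : v4g1 ≠ 1 := by decide
private lemma v4g2_ne_one : v4g2 ≠ 1 := by decide
private lemma v4g1_ne_v4g2 : v4g1 ≠ v4g2 := by decide

private lemma endgame
    (hcomm : commutator G ≠ ⊥) (hcentral : commutator G ≤ center G)
    (e_ab : Abelianization G ≃* Multiplicative (ZMod 2 × ZMod 2))
    (σ : MulAut G) (hσ3 : ∀ g : G, σ (σ (σ g)) = g)
    (htr : ∀ g : G, g * σ g * σ (σ g) ∈ commutator G) :
    Nonempty (G ≃* QuaternionGroup 2) := by
  haveI : Fact (Nat.Prime 2) := ⟨Nat.prime_two⟩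
  -- basic facts about the abelianization
  have hofsurj : Function.Surjective (Abelianization.of (G := G)) := fun q => by
    obtain ⟨g, hg⟩ := QuotientGroup.mk_surjective (s := commutator G) q
    exact ⟨g, hg⟩
  have hof1 : ∀ g : G, (Abelianization.of g = 1) ↔ g ∈ commutator G := fun g =>
    QuotientGroup.eq_one_iff g
  have hexpA : ∀ v : Abelianization G, v * v = 1 := by
    intro v
    have h := v4_sq (e_ab v)
    rw [← map_mul, ← map_one e_ab] at h
    exact e_ab.injective h
  have hcardA : Nat.card (Abelianization G) = 4 := by
    rw [Nat.card_congr e_ab.toEquiv, Nat.card_eq_fintype_card]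
    rfl
  have hsqmem : ∀ g : G, g * g ∈ commutator G := fun g =>
    (hof1 _).mp (by rw [map_mul]; exact hexpA _)
  have hcen : ∀ u ∈ commutator G, ∀ g : G, u * g = g * u := fun u hu g =>
    (mem_center_iff.mp (hcentral hu) g).symm
  -- lifting generators of the abelianization
  have genlift : ∀ u v : G,
      closure ({Abelianization.of u, Abelianization.of v} : Set (Abelianization G)) = ⊤ →
      ∀ g : G, g ∈ closure ({u, v} : Set G) ⊔ commutator G := by
    intro u v huv g
    have h1 : Abelianization.of g ∈ Subgroup.map Abelianization.of (closure {u, v}) := by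
      rw [MonoidHom.map_closure, Set.image_insert_eq, Set.image_singleton, huv]
      exact mem_top _
    obtain ⟨h, hh, hhg⟩ := h1
    have h2 : h⁻¹ * g ∈ commutator G := by
      rw [← hof1, map_mul, map_inv, hhg]
      group
    have h3 : g = h * (h⁻¹ * g) := by group
    rw [h3]
    exact mul_mem_sup hh h2
  have hσmap : ∀ g ∈ commutator G, σ g ∈ commutator G := by
    intro g hg
    have := Subgroup.characteristic_iff_le_comap.mp (Subgroup.commutator_characteristic ⊤ ⊤) σ
    exact mem_comap.mp (this hg)
  -- choose generators α β of the abelianization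
  set α : Abelianization G := e_ab.symm v4g1 with hαdef
  set β : Abelianization G := e_ab.symm v4g2 with hβdef
  have hα1 : α ≠ 1 := by
    intro h
    apply_fun e_ab at h
    simp only [hαdef, MulEquiv.apply_symm_apply, map_one] at h
    exact v4g1_ne_one h
  have hβ1 : β ≠ 1 := by
    intro h
    apply_fun e_ab at h
    simp only [hβdef, MulEquiv.apply_symm_apply, map_one] at h
    exact v4g2_ne_one h
  have hαβ : α ≠ β := by
    intro h
    apply_fun e_ab at h
    simp only [hαdef, hβdef, MulEquiv.apply_symm_apply] at h
    exact v4g1_ne_v4g2 h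
  obtain ⟨a, ha⟩ := hofsurj α
  obtain ⟨b, hb⟩ := hofsurj β
  set c : G := ⁅a, b⁆ with hcdef
  have hcmem : c ∈ commutator G := by
    rw [_root_.commutator_def]
    exact Subgroup.commutator_mem_commutator (mem_top a) (mem_top b)
  -- c is central, and c * c = 1
  have hccen : ∀ g : G, c * g = g * c := hcen c hcmem
  have hab2 : a * b = c * (b * a) := by rw [hcdef, commutatorElement_def]; group
  have hc2 : c * c = 1 := by
    have haacen := hcen (a * a) (hsqmem a)
    have key : b * (a * a) = (c * c) * (b * (a * a)) := by
      calc b * (a * a) = (a * a) * b := (haacen b).symm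
      _ = a * (a * b) := by group
      _ = a * (c * (b * a)) := by rw [← hab2]
      _ = (c * a) * (b * a) := by rw [← mul_assoc, ← hccen a]
      _ = c * ((a * b) * a) := by group
      _ = c * ((c * (b * a)) * a) := by rw [← hab2]
      _ = (c * c) * (b * (a * a)) := by group
    have key2 := key.symm
    conv_rhs at key2 => rw [show b * (a * a) = 1 * (b * (a * a)) by rw [one_mul]]
    exact mul_right_cancel key2
  -- commutator G = closure {c}
  have hDle : closure ({c} : Set G) ≤ commutator G := by
    rw [closure_le, Set.singleton_subset_iff]
    exact hcmem
  have hDcen : closure ({c} : Set G) ≤ center G := hDle.trans hcentral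
  haveI hDnormal : (closure ({c} : Set G)).Normal := by
    constructor
    intro x hx g
    rw [show g * x * g⁻¹ = x by rw [mem_center_iff.mp (hDcen hx) g]; group]
    exact hx
  have hgenab : ∀ g : G, g ∈ closure ({a, b} : Set G) ⊔ commutator G := by
    apply genlift
    rw [ha, hb]
    exact closure_pair_eq_top hcardA hα1 hβ1 hαβ
  have hunion : ∀ u v : G, (∀ g : G, g ∈ closure ({u, v} : Set G) ⊔ commutator G) →
      closure (({u, v} : Set G) ∪ (center G : Set G)) = ⊤ := by
    intro u v h
    rw [Subgroup.closure_union, closure_eq, eq_top_iff]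
    intro g hg
    exact sup_le_sup_left hcentral _ (h g)
  have hcommD : commutator G ≤ closure ({c} : Set G) := by
    set D := closure ({c} : Set G) with hDdef
    set π' := QuotientGroup.mk' D with hπ'
    have htop : closure ((π' : G → G ⧸ D) '' (({a, b} : Set G) ∪ (center G : Set G))) = ⊤ := by
      rw [← MonoidHom.map_closure, hunion a b hgenab]
      exact Subgroup.map_top_of_surjective _ (QuotientGroup.mk'_surjective D)
    have hcD : (π' c : G ⧸ D) = 1 := (QuotientGroup.eq_one_iff c).mpr (subset_closure rfl)
    have hcommab : Commute (π' a) (π' b) := by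
      rw [Commute, SemiconjBy, ← map_mul, ← map_mul, hab2, map_mul, hcD, one_mul]
    have hcommQ : ∀ x y : G ⧸ D, x * y = y * x := by
      apply commute_of_closure_eq_top _ htop
      rintro _ ⟨u, hu, rfl⟩ _ ⟨v, hv, rfl⟩
      rcases hu with hu | hu
      · rcases hv with hv | hv
        · rcases hu with rfl | rfl <;> rcases hv with rfl | rfl
          · exact Commute.refl _
          · exact hcommab
          · exact hcommab.symm
          · exact Commute.refl _
        · have := mem_center_iff.mp hv u
          rw [Commute, SemiconjBy, ← map_mul, ← map_mul, ← this]
      · have := mem_center_iff.mp hu v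
        rw [Commute, SemiconjBy, ← map_mul, ← map_mul, this]
    have hbot : commutator (G ⧸ D) = ⊥ := by
      rw [_root_.commutator_def, eq_bot_iff, Subgroup.commutator_le]
      intro g1 _ g2 _
      rw [mem_bot]
      exact commutatorElement_eq_one_iff_commute.mpr (hcommQ g1 g2)
    have hmap : Subgroup.map π' (commutator G) = ⊥ := by
      rw [_root_.commutator_def, Subgroup.map_commutator,
        Subgroup.map_top_of_surjective _ (QuotientGroup.mk'_surjective D), ← _root_.commutator_def,
        hbot]
    rw [← QuotientGroup.ker_mk' D]
    exact (Subgroup.map_eq_bot_iff _).mp hmap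
  have hcinv : c⁻¹ = c := inv_eq_of_mul_eq_one_right hc2
  have helem : ∀ u ∈ commutator G, u = 1 ∨ u = c := by
    intro u hu
    obtain ⟨k, hk⟩ := mem_closure_singleton.mp (hcommD hu)
    have hcsq : c ^ (2 : ℤ) = 1 := by rw [zpow_two, hc2]
    rcases Int.even_or_odd k with ⟨m, rfl⟩ | ⟨m, rfl⟩
    · left
      rw [← hk, ← two_mul, zpow_mul, hcsq, one_zpow]
    · right
      rw [← hk, zpow_add, zpow_mul, hcsq, one_zpow, zpow_one, one_mul]
  have hc1 : c ≠ 1 := by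
    intro h
    apply hcomm
    rw [eq_bot_iff]
    calc commutator G ≤ closure {c} := hcommD
    _ = ⊥ := by rw [h]; exact closure_singleton_one
  have hσfix : ∀ u ∈ commutator G, σ u = u := by
    have hσc : σ c = c := by
      rcases helem (σ c) (hσmap c hcmem) with h | h
      · exact absurd (σ.injective (h.trans (map_one σ).symm)) hc1
      · exact h
    intro u hu
    rcases helem u hu with rfl | rfl
    · exact map_one σ
    · exact hσc
  -- squares
  set s : G := a * a with hsdef
  have hs : s ∈ commutator G := hsqmem a
  have hσa2 : σ a * σ a = s := by rw [← map_mul]; exact hσfix s hs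
  have ht := htr a
  set t : G := a * σ a * σ (σ a) with htdef
  set d : G := ⁅σ a, a⁆ with hddef
  have hdmem : d ∈ commutator G := by
    rw [_root_.commutator_def]
    exact Subgroup.commutator_mem_commutator (mem_top _) (mem_top _)
  have hda : σ a * a = d * (a * σ a) := by rw [hddef, commutatorElement_def]; group
  have hss : s * s = 1 := by
    rcases helem s hs with h | h <;> rw [h]
    · exact one_mul 1
    · exact hc2
  have hu2 : (a * σ a) * (a * σ a) = d := by
    calc (a * σ a) * (a * σ a) = a * ((σ a * a) * σ a) := by group
    _ = a * ((d * (a * σ a)) * σ a) := by rw [hda]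
    _ = (a * d) * ((a * σ a) * σ a) := by group
    _ = (d * a) * ((a * σ a) * σ a) := by rw [← hcen d hdmem a]
    _ = d * ((a * a) * (σ a * σ a)) := by group
    _ = d * (s * s) := by rw [hσa2, ← hsdef]
    _ = d := by rw [hss, mul_one]
  have htt : t * t = 1 := by
    rcases helem t ht with h | h <;> rw [h]
    · exact one_mul 1
    · exact hc2
  have hσ2a : σ (σ a) = (a * σ a)⁻¹ * t := by rw [htdef]; group
  have hs2 : σ (σ a) * σ (σ a) = s := by
    rw [← map_mul, hσa2]
    exact hσfix s hs
  have hsd : s = d := by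
    have h1 : σ (σ a) * σ (σ a) = ((a * σ a) * (a * σ a))⁻¹ * (t * t) := by
      rw [hσ2a]
      calc (a * σ a)⁻¹ * t * ((a * σ a)⁻¹ * t)
          = (a * σ a)⁻¹ * ((t * (a * σ a)⁻¹) * t) := by group
      _ = (a * σ a)⁻¹ * (((a * σ a)⁻¹ * t) * t) := by rw [hcen t ht]
      _ = ((a * σ a) * (a * σ a))⁻¹ * (t * t) := by group
    rw [hs2, hu2, htt, mul_one] at h1
    have hdinv : d⁻¹ = d := by
      rcases helem d hdmem with h | h <;> rw [h]
      · exact inv_one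
      · exact hcinv
    rw [h1, hdinv]
  -- a and σ a map to distinct nontrivial elements of the abelianization
  have hofa1 : Abelianization.of a ≠ 1 := by rw [ha]; exact hα1
  have hofσa1 : Abelianization.of (σ a) ≠ 1 := by
    intro h
    apply hofa1
    rw [hof1] at h ⊢
    have := hσmap _ (hσmap _ h)
    rwa [hσ3 a] at this
  have hofne : Abelianization.of (σ a) ≠ Abelianization.of a := by
    intro h
    apply hofa1
    rw [hof1]
    have h1 : Abelianization.of t = 1 := (hof1 t).mpr ht
    rw [htdef, map_mul, map_mul, h, hexpA, one_mul] at h1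
    have := hσmap _ ((hof1 _).mp h1)
    rwa [hσ3 a] at this
  have hgenaσ : ∀ g : G, g ∈ closure ({a, σ a} : Set G) ⊔ commutator G := by
    apply genlift
    exact closure_pair_eq_top hcardA hofa1 hofσa1 (fun h => hofne h.symm)
  -- case split on s
  rcases helem s hs with hs1 | hsc
  · -- s = 1 : contradiction, G would be abelian
    exfalso
    have hd1 : d = 1 := by rw [← hsd, hs1]
    have hcommaσ : Commute (σ a) a := commutatorElement_eq_one_iff_commute.mp (hddef ▸ hd1)
    have htopG : closure (({a, σ a} : Set G) ∪ (center G : Set G)) = ⊤ := hunion a (σ a) hgenaσ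
    have hallcomm : ∀ x0 y0 : G, x0 * y0 = y0 * x0 := by
      apply commute_of_closure_eq_top _ htopG
      intro u hu v hv
      rcases hu with hu | hu
      · rcases hv with hv | hv
        · rcases hu with rfl | rfl <;> rcases hv with rfl | rfl
          · exact Commute.refl _
          · exact hcommaσ.symm
          · exact hcommaσ
          · exact Commute.refl _
        · exact mem_center_iff.mp hv u
      · exact (mem_center_iff.mp hu v).symm
    apply hcomm
    rw [_root_.commutator_def, eq_bot_iff, Subgroup.commutator_le]
    intro g1 _ g2 _
    rw [mem_bot]
    exact commutatorElement_eq_one_iff_commute.mpr (hallcomm g1 g2)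
  · -- s = c : G is the quaternion group
    set x : G := a
    set y : G := σ a
    have hx2 : x * x = c := by rw [← hsdef]; exact hsc
    have hx4 : x ^ 4 = 1 := by
      calc x ^ 4 = (x * x) * (x * x) := by rw [show (4:ℕ) = 2 + 2 from rfl, pow_add, pow_two]
      _ = 1 := by rw [hx2, hc2]
    have hdc : d = c := by rw [← hsd, hsc]
    have hcx_inv : c * x = x⁻¹ := by
      refine eq_inv_of_mul_eq_one_left ?_
      rw [mul_assoc, hx2, hc2]
    have hyx : y * x * y⁻¹ = x⁻¹ := by
      have h5 : y * x * y⁻¹ = c * x := by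
        calc y * x * y⁻¹ = ⁅y, x⁆ * x := by rw [commutatorElement_def]; group
        _ = c * x := by rw [← hddef, hdc]
      rw [h5, hcx_inv]
    have hy2 : y ^ 2 = x ^ 2 := by
      rw [pow_two, pow_two]
      rw [show (y : G) * y = s from hσa2, hsdef]
    have hgenxy : closure ({x, y} : Set G) = ⊤ := by
      have hstep : commutator G ≤ closure ({x, y} : Set G) := by
        refine hcommD.trans ?_
        rw [closure_le, Set.singleton_subset_iff, ← hx2]
        exact mul_mem (subset_closure (by simp)) (subset_closure (by simp))
      rw [eq_top_iff]
      intro g hg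
      exact sup_le (le_refl _) hstep (hgenaσ g)
    have hcard8 : Nat.card G = 8 := by
      have h1 : Nat.card (G ⧸ commutator G) = 4 := hcardA
      have h2 : Nat.card (commutator G) = 2 := by
        have hD : commutator G = closure ({c} : Set G) := le_antisymm hcommD hDle
        rw [hD, ← Subgroup.zpowers_eq_closure, Nat.card_zpowers]
        exact orderOf_eq_prime (by rw [pow_two, hc2]) hc1
      rw [Subgroup.card_eq_card_quotient_mul_card_subgroup (commutator G), h1, h2]
    exact mulEquiv_quaternion hx4 hyx hy2 hgenxy hcard8

end Endgame

section Q8Case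

private lemma lcs_succ_eq {G : Type*} [Group G] (n : ℕ) :
    Subgroup.lowerCentralSeries (⊤ : Subgroup G) (n + 1) = ⁅Subgroup.lowerCentralSeries (⊤ : Subgroup G) n, (⊤ : Subgroup G)⁆ := rfl

private lemma lcs_map_eq {G : Type*} [Group G] (σ : MulAut G) (n : ℕ) :
    (Subgroup.lowerCentralSeries (⊤ : Subgroup G) n).map σ.toMonoidHom = Subgroup.lowerCentralSeries (⊤ : Subgroup G) n := by
  induction n with
  | zero =>
    rw [Subgroup.lowerCentralSeries_zero]
    exact Subgroup.map_top_of_surjective _ σ.surjective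
  | succ n ih =>
    rw [lcs_succ_eq, Subgroup.map_commutator, ih,
      Subgroup.map_top_of_surjective _ σ.surjective]

private lemma q8_quotient_case {G : Type*} [Group G]
    {N : Subgroup G} [N.Normal] (hNcentral : N ≤ center G)
    (e : (G ⧸ N) ≃* QuaternionGroup 2) : commutator G ≤ center G := by
  set π := QuotientGroup.mk' N with hπdef
  set E : G →* QuaternionGroup 2 := e.toMonoidHom.comp π with hEdef
  have hEsurj : Function.Surjective E := e.surjective.comp (QuotientGroup.mk'_surjective N)
  have hkerE : ∀ g : G, E g = 1 → g ∈ N := by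
    intro g hg
    have h1 : π g = 1 := by
      apply e.injective
      rw [map_one]
      exact hg
    exact (QuotientGroup.eq_one_iff g).mp h1
  obtain ⟨a, ha⟩ := hEsurj (QuaternionGroup.a 1)
  obtain ⟨b, hb⟩ := hEsurj (QuaternionGroup.xa 0)
  set c : G := ⁅a, b⁆ with hcdef
  have hEc : E c = QuaternionGroup.a 2 := by
    rw [hcdef, map_commutatorElement, ha, hb, q8_ij]
  have hn1 : a * a * c⁻¹ ∈ N := hkerE _ (by rw [map_mul, map_mul, map_inv, ha, hEc]; exact q8_i2)
  have hn2 : b * b * c⁻¹ ∈ N := hkerE _ (by rw [map_mul, map_mul, map_inv, hb, hEc]; exact q8_j2)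
  have hcomm_ca : Commute c a := by
    have h1 : c = (a * a * c⁻¹)⁻¹ * (a * a) := by group
    have h2 : Commute (a * a * c⁻¹) a := ((mem_center_iff.mp (hNcentral hn1)) a).symm
    have h3 : Commute (a * a) a := (Commute.refl a).mul_left (Commute.refl a)
    rw [h1]
    exact h2.inv_left.mul_left h3
  have hcomm_cb : Commute c b := by
    have h1 : c = (b * b * c⁻¹)⁻¹ * (b * b) := by group
    have h2 : Commute (b * b * c⁻¹) b := ((mem_center_iff.mp (hNcentral hn2)) b).symm
    have h3 : Commute (b * b) b := (Commute.refl b).mul_left (Commute.refl b)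
    rw [h1]
    exact h2.inv_left.mul_left h3
  have hc_center : c ∈ center G := by
    rw [Subgroup.mem_center_iff]
    intro g
    have himg : E g ∈ Subgroup.map E (Subgroup.closure {a, b}) := by
      rw [MonoidHom.map_closure, Set.image_insert_eq, Set.image_singleton, ha, hb, q8_gen]
      exact Subgroup.mem_top _
    obtain ⟨h, hh, hhg⟩ := himg
    have hm : h⁻¹ * g ∈ N := hkerE _ (by rw [map_mul, map_inv, hhg]; group)
    have hch : c * h = h * c := by
      have hsub : Subgroup.closure ({a, b} : Set G) ≤ Subgroup.centralizer {c} := by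
        rw [Subgroup.closure_le]
        rintro u (rfl | rfl)
        · rw [SetLike.mem_coe, Subgroup.mem_centralizer_iff]
          rintro z rfl
          exact hcomm_ca
        · rw [SetLike.mem_coe, Subgroup.mem_centralizer_iff]
          rintro z rfl
          exact hcomm_cb
      exact Subgroup.mem_centralizer_iff.mp (hsub hh) c rfl
    have hmc := mem_center_iff.mp (hNcentral hm)
    calc g * c = (h * (h⁻¹ * g)) * c := by group
    _ = h * ((h⁻¹ * g) * c) := by rw [mul_assoc]
    _ = h * (c * (h⁻¹ * g)) := by rw [(hmc c).symm]
    _ = (h * c) * (h⁻¹ * g) := by rw [← mul_assoc]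
    _ = (c * h) * (h⁻¹ * g) := by rw [hch]
    _ = c * g := by group
  intro u hu
  have hEu : E u ∈ commutator (QuaternionGroup 2) := by
    have hmapc : Subgroup.map E (commutator G) = commutator (QuaternionGroup 2) := by
      rw [_root_.commutator_def, Subgroup.map_commutator,
        Subgroup.map_top_of_surjective _ hEsurj, ← _root_.commutator_def]
    rw [← hmapc]
    exact Subgroup.mem_map_of_mem E hu
  rcases q8_commutator_mem hEu with h | h
  · exact hNcentral (hkerE u h)
  · have h1 : c⁻¹ * u ∈ N := hkerE _ (by rw [map_mul, map_inv, hEc, h]; group)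
    have h2 : u = c * (c⁻¹ * u) := by group
    rw [h2]
    exact Subgroup.mul_mem _ hc_center (hNcentral h1)

end Q8Case

section Main

universe u

private theorem derhem_aux : ∀ (n : ℕ) (G : Type u) [Group G] [Finite G], Nat.card G = n →
    IsPGroup 2 G → Nonempty (Abelianization G ≃* Multiplicative (ZMod 2 × ZMod 2)) →
    ∀ σ : MulAut G, orderOf σ = 3 → (∀ x : G, x * σ x * σ (σ x) ∈ commutator G) →
    Nonempty (G ≃* Multiplicative (ZMod 2 × ZMod 2)) ∨ Nonempty (G ≃* QuaternionGroup 2) := by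
  intro n
  induction n using Nat.strong_induction_on with
  | _ n IH =>
  intro G _ _ hn h2 hab σ hσ htr
  obtain ⟨e_ab⟩ := hab
  haveI : Fact (Nat.Prime 2) := ⟨Nat.prime_two⟩
  haveI : Fact (Nat.Prime 3) := ⟨Nat.prime_three⟩
  have hσ3 : ∀ g : G, σ (σ (σ g)) = g := by
    intro g
    have h := pow_orderOf_eq_one σ
    rw [hσ] at h
    have h1 : (σ ^ 3) g = σ (σ (σ g)) := by
      rw [pow_succ, pow_succ, pow_one]
      rfl
    rw [h] at h1
    exact h1.symm
  -- abelianization facts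
  have hofsurj : Function.Surjective (Abelianization.of (G := G)) := fun q => by
    obtain ⟨g, hg⟩ := QuotientGroup.mk_surjective (s := commutator G) q
    exact ⟨g, hg⟩
  have hexpA : ∀ v : Abelianization G, v * v = 1 := by
    intro v
    have h := v4_sq (e_ab v)
    rw [← map_mul, ← map_one e_ab] at h
    exact e_ab.injective h
  have hAnontriv : ∃ v : Abelianization G, v ≠ 1 := by
    refine ⟨e_ab.symm v4g1, fun h => ?_⟩
    apply_fun e_ab at h
    simp only [MulEquiv.apply_symm_apply, map_one] at h
    exact v4g1_ne_one h
  by_cases hcomm : commutator G = ⊥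
  · -- abelian case
    left
    have hinj : Function.Injective (Abelianization.of (G := G)) := by
      rw [injective_iff_map_eq_one]
      intro g hg
      have := (QuotientGroup.eq_one_iff g).mp hg
      rw [hcomm] at this
      exact Subgroup.mem_bot.mp this
    exact ⟨(MulEquiv.ofBijective Abelianization.of ⟨hinj, hofsurj⟩).trans e_ab⟩
  · -- nonabelian case
    haveI hnilp : Group.IsNilpotent G := h2.isNilpotent
    set cl := Group.nilpotencyClass G with hcl
    have hcl2 : 2 ≤ cl := by
      by_contra hlt
      push_neg at hlt
      have h1 : Subgroup.lowerCentralSeries (⊤ : Subgroup G) 1 = ⊥ :=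
        Subgroup.lowerCentralSeries_eq_bot_iff_nilpotencyClass_le.mpr (by omega)
      rw [Subgroup.top_lowerCentralSeries_one] at h1
      exact hcomm h1
    set N := Subgroup.lowerCentralSeries (⊤ : Subgroup G) (cl - 1) with hN
    have hNbot : N ≠ ⊥ := by
      intro h
      have := Subgroup.lowerCentralSeries_eq_bot_iff_nilpotencyClass_le.mp h
      omega
    have hNcomm : N ≤ commutator G := by
      rw [hN, ← Subgroup.top_lowerCentralSeries_one]
      exact Subgroup.lowerCentralSeries_antitone _ (by omega)
    have hNcentral : N ≤ center G := by
      have h1 : ⁅N, (⊤ : Subgroup G)⁆ = ⊥ := by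
        rw [hN, ← lcs_succ_eq, show cl - 1 + 1 = cl by omega]
        exact Subgroup.lowerCentralSeries_nilpotencyClass
      have h2' := Subgroup.commutator_eq_bot_iff_le_centralizer.mp h1
      rwa [Subgroup.coe_top, Subgroup.centralizer_univ] at h2'
    set π := QuotientGroup.mk' N with hπ
    have hπsurj := QuotientGroup.mk'_surjective N
    have hcommQ : commutator (G ⧸ N) = Subgroup.map π (commutator G) := by
      rw [_root_.commutator_def, _root_.commutator_def, Subgroup.map_commutator,
        Subgroup.map_top_of_surjective _ hπsurj]
    have e1 : Abelianization (G ⧸ N) ≃* Abelianization G :=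
      (QuotientGroup.quotientMulEquivOfEq hcommQ).trans
        (QuotientGroup.quotientQuotientEquivQuotient N (commutator G) hNcomm)
    have hmapN : Subgroup.map (σ : G ≃* G).toMonoidHom N = N := lcs_map_eq σ (cl - 1)
    set σQ : MulAut (G ⧸ N) := QuotientGroup.congr N N (σ : G ≃* G) hmapN with hσQdef
    have hσQ_mk : ∀ g : G, σQ ((g : G ⧸ N)) = ((σ g : G) : G ⧸ N) := fun g => rfl
    have hσQ3 : σQ ^ 3 = 1 := by
      ext q
      induction q using QuotientGroup.induction_on with
      | _ g =>
        have happ : (σQ ^ 3) ((g : G ⧸ N)) = σQ (σQ (σQ ((g : G ⧸ N)))) := by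
          rw [pow_succ, pow_succ, pow_one]
          rfl
        rw [happ, hσQ_mk, hσQ_mk, hσQ_mk, hσ3 g]
        rfl
    have hσQne : σQ ≠ 1 := by
      intro h1
      have hfix : ∀ g : G, g⁻¹ * σ g ∈ N := by
        intro g
        have h2 : σQ ((g : G ⧸ N)) = (g : G ⧸ N) := by rw [h1]; rfl
        rw [hσQ_mk] at h2
        exact (QuotientGroup.eq (s := N)).mp h2.symm
      have hof : ∀ g : G, Abelianization.of (σ g) = Abelianization.of g := by
        intro g
        have h2 : g⁻¹ * σ g ∈ commutator G := hNcomm (hfix g)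
        have h3 : Abelianization.of (g⁻¹ * σ g) = 1 := (QuotientGroup.eq_one_iff _).mpr h2
        rw [map_mul, map_inv] at h3
        exact (inv_mul_eq_one.mp h3).symm
      have hall : ∀ g : G, Abelianization.of g = 1 := by
        intro g
        have h4 : Abelianization.of (g * σ g * σ (σ g)) = 1 :=
          (QuotientGroup.eq_one_iff _).mpr (htr g)
        rw [map_mul, map_mul, hof (σ g), hof g] at h4
        have h5 := hexpA (Abelianization.of g)
        rw [h5, one_mul] at h4
        exact h4
      obtain ⟨v, hv⟩ := hAnontriv
      obtain ⟨g, rfl⟩ := hofsurj v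
      exact hv (hall g)
    have hordσQ : orderOf σQ = 3 := orderOf_eq_prime hσQ3 hσQne
    have htrQ : ∀ q : G ⧸ N, q * σQ q * σQ (σQ q) ∈ commutator (G ⧸ N) := by
      intro q
      induction q using QuotientGroup.induction_on with
      | _ g =>
        rw [hcommQ]
        have h1 : ((g : G ⧸ N)) * σQ ((g : G ⧸ N)) * σQ (σQ ((g : G ⧸ N)))
            = ((g * σ g * σ (σ g) : G) : G ⧸ N) := by
          simp only [hσQ_mk]
          rfl
        rw [h1]
        exact Subgroup.mem_map_of_mem π (htr g)
    have hlt : Nat.card (G ⧸ N) < n := by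
      have hGcard := Subgroup.card_eq_card_quotient_mul_card_subgroup N
      have hN2 : 1 < Nat.card N := (Subgroup.one_lt_card_iff_ne_bot (H := N)).mpr hNbot
      have hQpos : 0 < Nat.card (G ⧸ N) := Nat.card_pos
      have := (Nat.lt_mul_iff_one_lt_right hQpos).mpr hN2
      omega
    rcases IH (Nat.card (G ⧸ N)) hlt (G ⧸ N) rfl (h2.to_quotient N) ⟨e1.trans e_ab⟩ σQ hordσQ htrQ
      with h4 | h8
    · -- quotient is the Klein four-group: commutator G is central
      obtain ⟨eq4⟩ := h4
      have hbotQ : commutator (G ⧸ N) = ⊥ := by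
        rw [_root_.commutator_def, eq_bot_iff, Subgroup.commutator_le]
        intro g1 _ g2 _
        rw [Subgroup.mem_bot]
        apply commutatorElement_eq_one_iff_commute.mpr
        exact eq4.injective (by rw [map_mul, map_mul, mul_comm])
      have hGN : commutator G ≤ N := by
        have h1 : Subgroup.map π (commutator G) = ⊥ := by rw [← hcommQ, hbotQ]
        have h2' := (Subgroup.map_eq_bot_iff _).mp h1
        rwa [hπ, QuotientGroup.ker_mk'] at h2'
      right
      exact endgame hcomm (hGN.trans hNcentral) e_ab σ hσ3 htr
    · -- quotient is the quaternion group: contradiction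
      exfalso
      obtain ⟨eQ8⟩ := h8
      have hGcenter : commutator G ≤ center G := q8_quotient_case hNcentral eQ8
      have hlcs2 : Subgroup.lowerCentralSeries (⊤ : Subgroup G) 2 = ⊥ :=
        Subgroup.lowerCentralSeries_succ_eq_bot ⊤ (by rw [Subgroup.top_lowerCentralSeries_one]; exact hGcenter)
      have hcl_le : cl ≤ 2 := Subgroup.lowerCentralSeries_eq_bot_iff_nilpotencyClass_le.mp hlcs2
      have hcl_eq : cl = 2 := le_antisymm hcl_le hcl2
      have hNcommEq : N = commutator G := by
        rw [hN, hcl_eq]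
        exact Subgroup.top_lowerCentralSeries_one
      have hcard1 : Nat.card (G ⧸ N) = 8 := by
        rw [Nat.card_congr eQ8.toEquiv, Nat.card_eq_fintype_card, QuaternionGroup.card]
      have hcard2 : Nat.card (G ⧸ N) = 4 := by
        rw [Nat.card_congr (QuotientGroup.quotientMulEquivOfEq hNcommEq).toEquiv]
        have h4 : Nat.card (Abelianization G) = 4 := by
          rw [Nat.card_congr e_ab.toEquiv, Nat.card_eq_fintype_card]
          rfl
        exact h4
      omega

end Main

/-- Derhem's theorem (group-theoretic form): a finite 2-group `G` with abelianization the
Klein four-group which admits an automorphism `σ` of order 3 with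
`x·σ(x)·σ²(x) ∈ [G,G]` for all `x` is isomorphic to the Klein four-group `ℤ/2 × ℤ/2`
or to the quaternion group `Q₈` (= `QuaternionGroup 2`). -/
theorem stmt_8 (G : Type*) [Group G] [Finite G] (h2 : IsPGroup 2 G)
    (hab : Nonempty (Abelianization G ≃* Multiplicative (ZMod 2 × ZMod 2)))
    (σ : MulAut G) (hσ : orderOf σ = 3)
    (htr : ∀ x : G, x * σ x * σ (σ x) ∈ commutator G) :
    Nonempty (G ≃* Multiplicative (ZMod 2 × ZMod 2)) ∨
      Nonempty (G ≃* QuaternionGroup 2) := by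
  exact derhem_aux (Nat.card G) G rfl h2 hab σ hσ htr
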